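/- Let x and y be balanced flush abaci on 2n runners (corresponding to minimal length coset representatives in the type C parabolic quotient). Then x is greater than or equal to y in strong Bruhat order if and only if, for every k ≥ 1, the k-th highest bead of x (reading beads along levels from right to left, starting from the highest level) lies at a position at least as high in reading order as the k-th highest bead of y. -/

import Mathlib

/-! Flush abaci with `r` runners, recorded by the level of the lowest bead on each runner
(runners 0-indexed by `Fin r`; entry at level `m` of runner `i` has value `m*(r+1) + (i+1)`). -/

/-- A balanced abacus on `2n` runners: the levels of symmetric runners sum to zero. -/
def BalancedAbacus (n : ℕ) (a : Fin (2*n) → ℤ) : Prop := ∀ i, a i + a i.rev = 0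

/-- `v` is the value of a bead of the flush abacus `a` on `r` runners. -/
def IsBead (r : ℕ) (a : Fin r → ℤ) (v : ℤ) : Prop :=
  ∃ i : Fin r, v % (r+1) = (i : ℤ) + 1 ∧ v ≤ (r+1) * a i + ((i : ℤ) + 1)

/-- `v` is the value of a gap (a non-bead entry) of the abacus `a`. -/
def IsGap (r : ℕ) (a : Fin r → ℤ) (v : ℤ) : Prop :=
  v % (r+1) ≠ 0 ∧ ¬ IsBead r a v

/-- The core partition of the abacus `a`: row `j` (0-indexed) is the number of gaps smaller
(in reading order) than the bead having exactly `j` beads above it. -/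
noncomputable def abacusCore (r : ℕ) (a : Fin r → ℤ) : ℕ → ℕ := fun j =>
  Nat.card {g : ℤ | IsGap r a g ∧ ∃ b : ℤ, IsBead r a b ∧
    Nat.card {b' : ℤ | IsBead r a b' ∧ b < b'} = j ∧ g < b}

/-- Level of runner `i` (0 for an out-of-range index). -/
def aget (r : ℕ) (a : Fin r → ℤ) (i : ℕ) : ℤ := if h : i < r then a ⟨i, h⟩ else 0

/-- The (0-indexed) position of the rightmost runner whose lowest bead is at the highest level. -/
noncomputable def largestRunner (r : ℕ) (a : Fin r → ℤ) : ℕ :=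
  sSup {i : ℕ | ∃ h : i < r, ∀ i', a i' ≤ a ⟨i, h⟩}

def swapIdx (p q x : ℕ) : ℕ := if x = p then q else if x = q then p else x

/-- Action of the Coxeter generator `s_t` (`0 ≤ t ≤ n`) of the affine Weyl group of type `Cₙ`
on balanced flush abaci, in terms of the level vector. -/
def genAct (n : ℕ) (t : ℕ) (a : Fin (2*n) → ℤ) : Fin (2*n) → ℤ := fun x =>
  if t = 0 then
    if x.val = 0 then aget (2*n) a (2*n-1) + 1
    else if x.val = 2*n-1 then aget (2*n) a 0 - 1
    else a x
  else if t = n then aget (2*n) a (swapIdx (n-1) n x.val)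
  else aget (2*n) a (swapIdx (t-1) t (swapIdx (2*n-1-t) (2*n-t) x.val))

/-- Apply a word in the generators to an abacus, leftmost letter first. -/
def applyWord (n : ℕ) (w : List ℕ) (a : Fin (2*n) → ℤ) : Fin (2*n) → ℤ :=
  w.foldl (fun b t => genAct n t b) a

/-- Coxeter length of the minimal coset representative corresponding to the abacus `a`:
the least length of a word in the generators carrying `a` to the identity abacus. -/
noncomputable def abacusLen (n : ℕ) (a : Fin (2*n) → ℤ) : ℕ :=
  sInf {ℓ : ℕ | ∃ w : List ℕ, (∀ t ∈ w, t ≤ n) ∧ applyWord n w a = 0 ∧ w.length = ℓ}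

def skipTwo (p q t : ℕ) : ℕ := if t < p then t else if t + 1 < q then t + 1 else t + 2

/-- Delete runner `j` and its symmetric runner `2n-1-j` from a balanced abacus on `2n` runners
(assuming `2n-1-j < j`), keeping the remaining runners in order with their levels. -/
def deleteRunners (n : ℕ) (a : Fin (2*n) → ℤ) (j : ℕ) : Fin (2*(n-1)) → ℤ :=
  fun t => aget (2*n) a (skipTwo (2*n-1-j) j t.val)

/-- Delete the single runner `j` from an abacus on `r` runners. -/
def deleteOne (r : ℕ) (a : Fin r → ℤ) (j : ℕ) : Fin (r-1) → ℤ :=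
  fun t => aget r a (if t.val < j then t.val else t.val + 1)

section Aux
open scoped Classical

noncomputable def beadsF (r : ℕ) (a : Fin r → ℤ) (u t : ℤ) : Finset ℤ :=
  (Finset.Ico u t).filter (IsBead r a)

noncomputable def gapsF (r : ℕ) (a : Fin r → ℤ) (u t : ℤ) : Finset ℤ :=
  (Finset.Ico u t).filter (IsGap r a)

noncomputable def posF (r : ℕ) (u t : ℤ) : Finset ℤ :=
  (Finset.Ico u t).filter (fun v => v % ((r:ℤ)+1) ≠ 0)

lemma bead_iff (r : ℕ) (a : Fin r → ℤ) (v : ℤ) :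
    IsBead r a v ↔ ∃ (i : Fin r) (m : ℤ), m ≤ a i ∧ v = ((r:ℤ)+1) * m + ((i:ℤ)+1) := by
  constructor
  · rintro ⟨i, h1, h2⟩
    refine ⟨i, v / ((r:ℤ)+1), ?_, ?_⟩
    · have hpos : (0:ℤ) < (r:ℤ)+1 := by positivity
      have := Int.mul_ediv_add_emod v ((r:ℤ)+1)
      nlinarith [h2, h1]
    · have := Int.mul_ediv_add_emod v ((r:ℤ)+1)
      linarith [h1]
  · rintro ⟨i, m, hm, rfl⟩
    refine ⟨i, ?_, ?_⟩
    · have h1 : ((r:ℤ)+1) * m + ((i:ℤ)+1) = ((i:ℤ)+1) + m * ((r:ℤ)+1) := by ring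
      rw [h1, Int.add_mul_emod_self_right]
      exact Int.emod_eq_of_lt (by positivity) (by exact_mod_cast by omega)
    · have hpos : (0:ℤ) < (r:ℤ)+1 := by positivity
      nlinarith

lemma bead_pos (r : ℕ) (a : Fin r → ℤ) (v : ℤ) (h : IsBead r a v) : v % ((r:ℤ)+1) ≠ 0 := by
  obtain ⟨i, h1, _⟩ := h
  have : (0:ℤ) < (i:ℤ) + 1 := by positivity
  omega

lemma bead_lt (r : ℕ) (a : Fin r → ℤ) (A : ℤ) (hA : ∀ i, a i ≤ A) (v : ℤ)
    (h : IsBead r a v) : v < ((r:ℤ)+1) * (A+1) := by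
  rw [bead_iff] at h
  obtain ⟨i, m, hm, rfl⟩ := h
  have hi : (i:ℤ) + 1 < (r:ℤ) + 1 := by exact_mod_cast by omega
  nlinarith [hA i, hi]

lemma gap_gt (r : ℕ) (a : Fin r → ℤ) (V : ℤ) (hV : ∀ i, V ≤ a i) (v : ℤ)
    (h : IsGap r a v) : ((r:ℤ)+1) * V + 1 ≤ v := by
  obtain ⟨h1, h2⟩ := h
  -- v is a position: v % (r+1) = c with 1 ≤ c ≤ r; let i be runner c-1
  have hpos : (0:ℤ) < (r:ℤ)+1 := by positivity
  have hmod := Int.emod_nonneg v (by positivity : ((r:ℤ)+1) ≠ 0)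
  have hmod2 := Int.emod_lt_of_pos v hpos
  set c := v % ((r:ℤ)+1) with hc
  have hc1 : 1 ≤ c := by omega
  have hcr : c ≤ (r:ℤ) := by omega
  have hr0 : 0 < r := by omega
  have hcnat : ∃ i : Fin r, (i:ℤ) + 1 = c := by
    refine ⟨⟨(c-1).toNat, ?_⟩, ?_⟩
    · omega
    · simp; omega
  obtain ⟨i, hi⟩ := hcnat
  -- since v is not a bead: ¬ (v ≤ (r+1) * a i + c)
  have hnb : ¬ v ≤ ((r:ℤ)+1) * a i + c := by
    intro hle
    exact h2 ⟨i, by omega, by rw [hi]; exact hle⟩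
  push_neg at hnb
  -- v = (r+1)*m + c with m = v / (r+1), and m ≥ a i + 1 ≥ V + 1
  have hdm := Int.mul_ediv_add_emod v ((r:ℤ)+1)
  have hm : a i < v / ((r:ℤ)+1) := by nlinarith
  have := hV i
  nlinarith [hm, this]

lemma beads_above_eq (r : ℕ) (a : Fin r → ℤ) (c t : ℤ) (ht : ∀ w, IsBead r a w → w < t) :
    {b' : ℤ | IsBead r a b' ∧ c < b'} = ↑(beadsF r a (c+1) t) := by
  ext w
  simp only [Set.mem_setOf_eq, beadsF, Finset.coe_filter, Finset.mem_Ico, Set.mem_setOf_eq,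
    Finset.mem_coe]
  constructor
  · rintro ⟨hb, hc⟩
    exact ⟨⟨by omega, ht w hb⟩, hb⟩
  · rintro ⟨⟨h1, _⟩, hb⟩
    exact ⟨hb, by omega⟩

lemma natCard_beads_above (r : ℕ) (a : Fin r → ℤ) (c t : ℤ) (ht : ∀ w, IsBead r a w → w < t) :
    Nat.card {b' : ℤ | IsBead r a b' ∧ c < b'} = (beadsF r a (c+1) t).card := by
  rw [beads_above_eq r a c t ht, Nat.card_coe_set_eq, Set.ncard_coe_finset]

lemma gaps_below_eq (r : ℕ) (a : Fin r → ℤ) (v0 b : ℤ) (hv0 : ∀ g, IsGap r a g → v0 ≤ g) :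
    {g : ℤ | IsGap r a g ∧ g < b} = ↑(gapsF r a v0 b) := by
  ext w
  simp only [Set.mem_setOf_eq, gapsF, Finset.coe_filter, Finset.mem_Ico, Set.mem_setOf_eq]
  constructor
  · rintro ⟨hg, hb⟩
    exact ⟨⟨hv0 w hg, hb⟩, hg⟩
  · rintro ⟨⟨_, h2⟩, hg⟩
    exact ⟨hg, h2⟩

lemma pos_card_split (r : ℕ) (a : Fin r → ℤ) (u t : ℤ) :
    (posF r u t).card = (beadsF r a u t).card + (gapsF r a u t).card := by
  classical
  have h1 : beadsF r a u t = (posF r u t).filter (IsBead r a) := by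
    ext w
    simp only [beadsF, posF, Finset.mem_filter, Finset.mem_Ico]
    constructor
    · rintro ⟨hi, hb⟩; exact ⟨⟨hi, bead_pos r a w hb⟩, hb⟩
    · rintro ⟨⟨hi, _⟩, hb⟩; exact ⟨hi, hb⟩
  have h2 : gapsF r a u t = (posF r u t).filter (fun w => ¬ IsBead r a w) := by
    ext w
    simp only [gapsF, posF, Finset.mem_filter, Finset.mem_Ico, IsGap]
    constructor
    · rintro ⟨hi, hp, hb⟩; exact ⟨⟨hi, hp⟩, hb⟩
    · rintro ⟨⟨hi, hp⟩, hb⟩; exact ⟨hi, hp, hb⟩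
  rw [h1, h2]
  exact (Finset.card_filter_add_card_filter_not _).symm

lemma beads_card_split (r : ℕ) (a : Fin r → ℤ) (u b t : ℤ) (h1 : u ≤ b) (h2 : b ≤ t) :
    (beadsF r a u t).card = (beadsF r a u b).card + (beadsF r a b t).card := by
  classical
  have : Finset.Ico u t = Finset.Ico u b ∪ Finset.Ico b t := (Finset.Ico_union_Ico_eq_Ico h1 h2).symm
  rw [beadsF, this, Finset.filter_union]
  rw [Finset.card_union_of_disjoint]
  · rfl
  · refine Finset.disjoint_filter_filter ?_
    exact Finset.Ico_disjoint_Ico_consecutive u b t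

lemma beads_Ico_succ (r : ℕ) (a : Fin r → ℤ) (b t : ℤ) (hb : IsBead r a b)
    (hbt : b < t) : (beadsF r a b t).card = (beadsF r a (b+1) t).card + 1 := by
  classical
  have : beadsF r a b t = insert b (beadsF r a (b+1) t) := by
    ext w
    simp only [beadsF, Finset.mem_insert, Finset.mem_filter, Finset.mem_Ico]
    constructor
    · rintro ⟨⟨h1, h2⟩, hw⟩
      rcases eq_or_lt_of_le h1 with h | h
      · exact Or.inl h.symm
      · exact Or.inr ⟨⟨by omega, h2⟩, hw⟩
    · rintro (rfl | ⟨⟨h1, h2⟩, hw⟩)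
      · exact ⟨⟨le_refl _, hbt⟩, hb⟩
      · exact ⟨⟨by omega, h2⟩, hw⟩
  rw [this, Finset.card_insert_of_notMem]
  simp [beadsF]

lemma beads_total_card (r : ℕ) (a : Fin r → ℤ) (V t : ℤ)
    (hV : ∀ i, V ≤ a i) (ht : ∀ w, IsBead r a w → w < t) :
    (beadsF r a (((r:ℤ)+1)*V + 1) t).card = ∑ i : Fin r, (a i - V + 1).toNat := by
  have hbi : beadsF r a (((r:ℤ)+1)*V + 1) t =
      Finset.univ.biUnion (fun i : Fin r =>
        (Finset.Icc V (a i)).image (fun m => ((r:ℤ)+1) * m + ((i:ℤ)+1))) := by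
    ext w
    simp only [beadsF, Finset.mem_filter, Finset.mem_Ico, Finset.mem_biUnion, Finset.mem_univ,
      Finset.mem_image, Finset.mem_Icc, true_and]
    constructor
    · rintro ⟨⟨h1, h2⟩, hb⟩
      obtain ⟨i, m, hm, rfl⟩ := (bead_iff r a w).mp hb
      refine ⟨i, m, ⟨?_, hm⟩, rfl⟩
      have hi : (i:ℤ) + 1 ≤ (r:ℤ) := by exact_mod_cast by omega
      nlinarith
    · rintro ⟨i, m, ⟨hVm, hm⟩, rfl⟩
      have hb : IsBead r a (((r:ℤ)+1) * m + ((i:ℤ)+1)) := (bead_iff r a _).mpr ⟨i, m, hm, rfl⟩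
      refine ⟨⟨?_, ht _ hb⟩, hb⟩
      have : (0:ℤ) ≤ (i:ℤ) := by positivity
      nlinarith
  rw [hbi, Finset.card_biUnion]
  · congr 1
    ext i
    rw [Finset.card_image_of_injective, Int.card_Icc]
    · congr 1; omega
    · intro m1 m2 h
      simp only at h
      have h2 : ((r:ℤ)+1) * m1 = ((r:ℤ)+1) * m2 := by linarith
      exact mul_left_cancel₀ (by positivity) h2
  · intro i _ j _ hij
    simp only [Finset.disjoint_left, Finset.mem_image, Finset.mem_Icc]
    rintro w ⟨m1, _, rfl⟩ ⟨m2, _, he⟩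
    apply hij
    have hi : (i:ℤ) + 1 < (r:ℤ) + 1 := by exact_mod_cast by omega
    have hj : (j:ℤ) + 1 < (r:ℤ) + 1 := by exact_mod_cast by omega
    have h0 : (((j:ℤ)+1) + m2*((r:ℤ)+1)) % ((r:ℤ)+1) = (((i:ℤ)+1) + m1*((r:ℤ)+1)) % ((r:ℤ)+1) := by
      rw [show ((j:ℤ)+1) + m2*((r:ℤ)+1) = ((r:ℤ)+1) * m2 + ((j:ℤ)+1) by ring,
          show ((i:ℤ)+1) + m1*((r:ℤ)+1) = ((r:ℤ)+1) * m1 + ((i:ℤ)+1) by ring, he]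
    rw [Int.add_mul_emod_self_right, Int.add_mul_emod_self_right] at h0
    rw [Int.emod_eq_of_lt (by positivity) hj, Int.emod_eq_of_lt (by positivity) hi] at h0
    have hv : (i:ℕ) = (j:ℕ) := by omega
    exact Fin.ext hv

lemma total_eq (r : ℕ) (x y : Fin r → ℤ) (V : ℤ)
    (hVx : ∀ i, V ≤ x i) (hVy : ∀ i, V ≤ y i)
    (hsx : ∑ i, x i = 0) (hsy : ∑ i, y i = 0) :
    ∑ i : Fin r, (x i - V + 1).toNat = ∑ i : Fin r, (y i - V + 1).toNat := by
  have hx : ((∑ i : Fin r, (x i - V + 1).toNat : ℕ) : ℤ) = ∑ i : Fin r, (x i - V + 1) := by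
    push_cast
    refine Finset.sum_congr rfl fun i _ => ?_
    rw [Int.toNat_of_nonneg]; linarith [hVx i]
  have hy : ((∑ i : Fin r, (y i - V + 1).toNat : ℕ) : ℤ) = ∑ i : Fin r, (y i - V + 1) := by
    push_cast
    refine Finset.sum_congr rfl fun i _ => ?_
    rw [Int.toNat_of_nonneg]; linarith [hVy i]
  have key : ∀ z : Fin r → ℤ, (∑ i, z i = 0) → ∑ i : Fin r, (z i - V + 1) = ∑ _i : Fin r, (1 - V) := by
    intro z hz
    have : ∑ i : Fin r, (z i - V + 1) = (∑ i, z i) + ∑ _i : Fin r, (1 - V) := by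
      rw [← Finset.sum_add_distrib]
      exact Finset.sum_congr rfl fun i _ => by ring
    rw [this, hz, zero_add]
  have : (∑ i : Fin r, (x i - V + 1)) = ∑ i : Fin r, (y i - V + 1) := by
    rw [key x hsx, key y hsy]
  omega

lemma mem_beadsF (r : ℕ) (a : Fin r → ℤ) (u t w : ℤ) :
    w ∈ beadsF r a u t ↔ u ≤ w ∧ w < t ∧ IsBead r a w := by
  simp only [beadsF, Finset.mem_filter, Finset.mem_Ico]
  tauto

lemma bead_down (r : ℕ) (a : Fin r → ℤ) (b : ℤ) (hb : IsBead r a b) :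
    IsBead r a (b - ((r:ℤ)+1)) := by
  rw [bead_iff] at hb ⊢
  obtain ⟨i, m, hm, rfl⟩ := hb
  exact ⟨i, m - 1, by omega, by ring⟩

lemma bead_uniq (r : ℕ) (a : Fin r → ℤ) (A : ℤ) (hA : ∀ i, a i ≤ A) (j : ℕ) (b1 b2 : ℤ)
    (h1 : IsBead r a b1) (hc1 : Nat.card {b' : ℤ | IsBead r a b' ∧ b1 < b'} = j)
    (h2 : IsBead r a b2) (hc2 : Nat.card {b' : ℤ | IsBead r a b' ∧ b2 < b'} = j) :
    b1 = b2 := by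
  set t := ((r:ℤ)+1) * (A+1) with hts
  have ht : ∀ w, IsBead r a w → w < t := fun w hw => bead_lt r a A hA w hw
  rw [natCard_beads_above r a _ t ht] at hc1 hc2
  have key : ∀ c1 c2 : ℤ, IsBead r a c2 → c1 < c2 →
      (beadsF r a (c2+1) t).card < (beadsF r a (c1+1) t).card := by
    intro c1 c2 hc hlt
    have hsub : insert c2 (beadsF r a (c2+1) t) ⊆ beadsF r a (c1+1) t := by
      intro w hw
      rw [mem_beadsF]
      rw [Finset.mem_insert, mem_beadsF] at hw
      rcases hw with rfl | ⟨hw1, hw2, hw3⟩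
      · exact ⟨by omega, ht _ hc, hc⟩
      · exact ⟨by omega, hw2, hw3⟩
    have hnot : c2 ∉ beadsF r a (c2+1) t := by rw [mem_beadsF]; omega
    have := Finset.card_le_card hsub
    rw [Finset.card_insert_of_notMem hnot] at this
    omega
  rcases lt_trichotomy b1 b2 with h | h | h
  · exact absurd (key b1 b2 h2 h) (by omega)
  · exact h
  · exact absurd (key b2 b1 h1 h) (by omega)

lemma bead_exists (r : ℕ) (hr : 0 < r) (a : Fin r → ℤ) (A : ℤ) (hA : ∀ i, a i ≤ A) (j : ℕ) :
    ∃ b : ℤ, IsBead r a b ∧ Nat.card {b' : ℤ | IsBead r a b' ∧ b < b'} = j := by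
  set t := ((r:ℤ)+1) * (A+1) with hts
  have ht : ∀ w, IsBead r a w → w < t := fun w hw => bead_lt r a A hA w hw
  induction j with
  | zero =>
    set i0 : Fin r := ⟨0, hr⟩ with hi0
    have hb0 : IsBead r a (((r:ℤ)+1) * a i0 + ((i0:ℤ)+1)) :=
      (bead_iff r a _).mpr ⟨i0, a i0, le_refl _, rfl⟩
    set u := ((r:ℤ)+1) * a i0 + ((i0:ℤ)+1) with hu
    have hne : (beadsF r a u t).Nonempty :=
      ⟨u, (mem_beadsF r a u t u).mpr ⟨le_refl _, ht _ hb0, hb0⟩⟩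
    set b := (beadsF r a u t).max' hne with hmax
    have hbmem := (mem_beadsF r a u t b).mp ((beadsF r a u t).max'_mem hne)
    refine ⟨b, hbmem.2.2, ?_⟩
    rw [natCard_beads_above r a _ t ht]
    rw [Finset.card_eq_zero]
    rw [Finset.eq_empty_iff_forall_notMem]
    intro w hw
    rw [mem_beadsF] at hw
    have : w ≤ b := Finset.le_max' (beadsF r a u t) w
      ((mem_beadsF r a u t w).mpr ⟨by omega, hw.2.1, hw.2.2⟩)
    omega
  | succ j ih =>
    obtain ⟨b, hb, hcb⟩ := ih
    have hbd : IsBead r a (b - ((r:ℤ)+1)) := bead_down r a b hb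
    have hrpos : (0:ℤ) < (r:ℤ)+1 := by positivity
    have hne : (beadsF r a (b - ((r:ℤ)+1)) b).Nonempty :=
      ⟨b - ((r:ℤ)+1), (mem_beadsF r a _ b _).mpr ⟨le_refl _, by omega, hbd⟩⟩
    set b' := (beadsF r a (b - ((r:ℤ)+1)) b).max' hne with hmax
    have hbmem := (mem_beadsF r a _ b b').mp ((beadsF r a (b - ((r:ℤ)+1)) b).max'_mem hne)
    refine ⟨b', hbmem.2.2, ?_⟩
    rw [natCard_beads_above r a _ t ht]
    have heq : beadsF r a (b'+1) t = beadsF r a b t := by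
      ext w
      rw [mem_beadsF, mem_beadsF]
      constructor
      · rintro ⟨hw1, hw2, hw3⟩
        refine ⟨?_, hw2, hw3⟩
        by_contra hwb
        push_neg at hwb
        have : w ≤ b' := Finset.le_max' (beadsF r a (b - ((r:ℤ)+1)) b) w
          ((mem_beadsF r a _ b w).mpr ⟨by omega, hwb, hw3⟩)
        omega
      · rintro ⟨hw1, hw2, hw3⟩
        exact ⟨by omega, hw2, hw3⟩
    rw [heq, beads_Ico_succ r a b t hb (ht b hb)]
    rw [natCard_beads_above r a _ t ht] at hcb
    omega

lemma balanced_sum (n : ℕ) (a : Fin (2*n) → ℤ) (h : BalancedAbacus n a) :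
    ∑ i, a i = 0 := by
  have h1 : ∑ i : Fin (2*n), (a i + a i.rev) = 0 :=
    Finset.sum_eq_zero fun i _ => h i
  rw [Finset.sum_add_distrib] at h1
  have h2 : ∑ i : Fin (2*n), a i.rev = ∑ i : Fin (2*n), a i :=
    Fintype.sum_bijective Fin.rev ⟨Fin.rev_injective, Fin.rev_surjective⟩ _ _ (fun i => rfl)
  omega

lemma core_cmp (r : ℕ) (x y : Fin r → ℤ)
    (hsx : ∑ i, x i = 0) (hsy : ∑ i, y i = 0) (j : ℕ) (bx by' : ℤ)
    (hbx : IsBead r x bx) (hcx : Nat.card {b : ℤ | IsBead r x b ∧ bx < b} = j)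
    (hby : IsBead r y by') (hcy : Nat.card {b : ℤ | IsBead r y b ∧ by' < b} = j) :
    (abacusCore r y j ≤ abacusCore r x j ↔ by' ≤ bx) := by
  obtain ⟨Ax, hAx⟩ := Finite.exists_le x
  obtain ⟨Ay, hAy⟩ := Finite.exists_le y
  set A := max Ax Ay with hA
  have hAx' : ∀ i, x i ≤ A := fun i => le_trans (hAx i) (le_max_left _ _)
  have hAy' : ∀ i, y i ≤ A := fun i => le_trans (hAy i) (le_max_right _ _)
  set t := ((r:ℤ)+1) * (A+1) with ht
  have htx : ∀ w, IsBead r x w → w < t := fun w hw => bead_lt r x A hAx' w hw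
  have hty : ∀ w, IsBead r y w → w < t := fun w hw => bead_lt r y A hAy' w hw
  obtain ⟨Wx, hWx⟩ := Finite.exists_le (fun i => - x i)
  obtain ⟨Wy, hWy⟩ := Finite.exists_le (fun i => - y i)
  set V := min (min (min (-Wx) (-Wy)) 0) (min (bx - 1) (by' - 1)) with hV
  have hVx : ∀ i, V ≤ x i := fun i => by have := hWx i; omega
  have hVy : ∀ i, V ≤ y i := fun i => by have := hWy i; omega
  have hV0 : V ≤ 0 := by omega
  have hrV : ((r:ℤ)+1) * V ≤ V := by nlinarith [Nat.cast_nonneg (α := ℤ) r]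
  set v0 := ((r:ℤ)+1) * V + 1 with hv0
  have hv0bx : v0 ≤ bx := by omega
  have hv0by : v0 ≤ by' := by omega
  -- gaps are ≥ v0
  have hgx : ∀ g, IsGap r x g → v0 ≤ g := fun g hg => gap_gt r x V hVx g hg
  have hgy : ∀ g, IsGap r y g → v0 ≤ g := fun g hg => gap_gt r y V hVy g hg
  -- core values as gap counts
  have hcorex : abacusCore r x j = (gapsF r x v0 bx).card := by
    unfold abacusCore
    have hset : {g : ℤ | IsGap r x g ∧ ∃ b : ℤ, IsBead r x b ∧
        Nat.card {b' : ℤ | IsBead r x b' ∧ b < b'} = j ∧ g < b} = {g : ℤ | IsGap r x g ∧ g < bx} := by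
      ext g
      simp only [Set.mem_setOf_eq]
      constructor
      · rintro ⟨hg, b, hb, hcb, hgb⟩
        have := bead_uniq r x A hAx' j b bx hb hcb hbx hcx
        exact ⟨hg, by omega⟩
      · rintro ⟨hg, hgb⟩
        exact ⟨hg, bx, hbx, hcx, hgb⟩
    rw [hset, gaps_below_eq r x v0 bx hgx, Nat.card_coe_set_eq, Set.ncard_coe_finset]
  have hcorey : abacusCore r y j = (gapsF r y v0 by').card := by
    unfold abacusCore
    have hset : {g : ℤ | IsGap r y g ∧ ∃ b : ℤ, IsBead r y b ∧
        Nat.card {b' : ℤ | IsBead r y b' ∧ b < b'} = j ∧ g < b} = {g : ℤ | IsGap r y g ∧ g < by'} := by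
      ext g
      simp only [Set.mem_setOf_eq]
      constructor
      · rintro ⟨hg, b, hb, hcb, hgb⟩
        have := bead_uniq r y A hAy' j b by' hb hcb hby hcy
        exact ⟨hg, by omega⟩
      · rintro ⟨hg, hgb⟩
        exact ⟨hg, by', hby, hcy, hgb⟩
    rw [hset, gaps_below_eq r y v0 by' hgy, Nat.card_coe_set_eq, Set.ncard_coe_finset]
  -- counting identities
  have hpx := pos_card_split r x v0 bx
  have hpy := pos_card_split r y v0 by'
  have hsplx := beads_card_split r x v0 bx t hv0bx (le_of_lt (htx bx hbx))
  have hsply := beads_card_split r y v0 by' t hv0by (le_of_lt (hty by' hby))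
  have hsuccx := beads_Ico_succ r x bx t hbx (htx bx hbx)
  have hsuccy := beads_Ico_succ r y by' t hby (hty by' hby)
  have hjx : (beadsF r x (bx+1) t).card = j := by
    rw [← natCard_beads_above r x bx t htx]; exact hcx
  have hjy : (beadsF r y (by'+1) t).card = j := by
    rw [← natCard_beads_above r y by' t hty]; exact hcy
  have htotx := beads_total_card r x V t hVx htx
  have htoty := beads_total_card r y V t hVy hty
  have htot := total_eq r x y V hVx hVy hsx hsy
  have hC : (beadsF r x v0 t).card = (beadsF r y v0 t).card := by
    rw [hv0, htotx, htoty]; exact htot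
  -- P relation:  Px + j + 1 = Gx + C
  have hPx : (posF r v0 bx).card + j + 1 = (gapsF r x v0 bx).card + (beadsF r x v0 t).card := by
    omega
  have hPy : (posF r v0 by').card + j + 1 = (gapsF r y v0 by').card + (beadsF r y v0 t).card := by
    omega
  -- monotonicity of positions count
  have hmono : ∀ u v : ℤ, u ≤ v → (posF r v0 u).card ≤ (posF r v0 v).card := by
    intro u v huv
    apply Finset.card_le_card
    unfold posF
    apply Finset.filter_subset_filter
    exact Finset.Ico_subset_Ico (le_refl _) huv
  have hstrict : ∀ u v : ℤ, v0 ≤ u → u < v → u % ((r:ℤ)+1) ≠ 0 →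
      (posF r v0 u).card < (posF r v0 v).card := by
    intro u v hu huv hup
    apply Finset.card_lt_card
    rw [Finset.ssubset_iff_of_subset (by
      unfold posF
      apply Finset.filter_subset_filter
      exact Finset.Ico_subset_Ico (le_refl _) (by omega))]
    refine ⟨u, ?_, ?_⟩
    · simp only [posF, Finset.mem_filter, Finset.mem_Ico]
      exact ⟨⟨hu, huv⟩, hup⟩
    · simp only [posF, Finset.mem_filter, Finset.mem_Ico]
      push_neg
      intro h1
      omega
  rw [hcorex, hcorey]
  constructor
  · intro hle
    by_contra hgt
    push_neg at hgt
    have := hstrict bx by' hv0bx hgt (bead_pos r x bx hbx)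
    omega
  · intro hle
    have := hmono by' bx hle
    omega

end Aux

/-- For balanced flush abaci `x, y` on `2n` runners, `x ≥ y` in strong Bruhat order (i.e.
the core of `x` contains the core of `y`) iff for every `j`, the `j`-th highest bead of `x`
is at least as high in reading order as the `j`-th highest bead of `y`. -/


theorem stmt14 (n : ℕ) (hn : 1 ≤ n) (x y : Fin (2*n) → ℤ)
    (hbx : BalancedAbacus n x) (hby : BalancedAbacus n y) :
    (∀ i, abacusCore (2*n) y i ≤ abacusCore (2*n) x i) ↔
      ∀ (j : ℕ) (bx by' : ℤ),
        IsBead (2*n) x bx → Nat.card {b : ℤ | IsBead (2*n) x b ∧ bx < b} = j →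
        IsBead (2*n) y by' → Nat.card {b : ℤ | IsBead (2*n) y b ∧ by' < b} = j →
        by' ≤ bx := by
  have hr : 0 < 2*n := by omega
  have hsx := balanced_sum n x hbx
  have hsy := balanced_sum n y hby
  constructor
  · intro hcore j bx by' h1 h2 h3 h4
    exact (core_cmp (2*n) x y hsx hsy j bx by' h1 h2 h3 h4).mp (hcore j)
  · intro h i
    obtain ⟨Ax, hAx⟩ := Finite.exists_le x
    obtain ⟨Ay, hAy⟩ := Finite.exists_le y
    obtain ⟨bx, hbx', hcx⟩ := bead_exists (2*n) hr x Ax hAx i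
    obtain ⟨by', hby', hcy⟩ := bead_exists (2*n) hr y Ay hAy i
    exact (core_cmp (2*n) x y hsx hsy i bx by' hbx' hcx hby' hcy).mpr
      (h i bx by' hbx' hcx hby' hcy)
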